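/- Let g be a kernel on N = {1,…,n}, let m be a positive integer, let I₀ ⊆ I₁ ⊆ N, let z : I₀ → M_m(ℂ), and let P be the orthogonal projection of H_{g,m}(I₁) onto H_{g,m}(I₀,I₁) = H_{g,m}(I₁) ⊖ H_{g,m}(I₁∖I₀). If z̃₁ and z̃₂ are any two extensions of z to I₁ (i.e. z̃₁, z̃₂ : I₁ → M_m(ℂ) with z̃₁|_{I₀} = z̃₂|_{I₀} = z), then P·T_{g,z̃₁}x = P·T_{g,z̃₂}x for every x ∈ H_{g,m}(I₀,I₁); that is, the compression T_{g,z}(I₁) = P·T_{g,z̃}|_{H_{g,m}(I₀,I₁)} depends only on z and I₁ and not on the choice of extension z̃. -/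

import Mathlib

open Matrix
open scoped ComplexOrder

noncomputable section

/-- `g` is a kernel on `N = {1,…,n}`: the matrix `(g i j)` is positive semidefinite and
its restriction to the support `spt g = {i | g i i ≠ 0}` is positive definite. -/
def IsDiscreteKernel (n : ℕ) (g : Fin n → Fin n → ℂ) : Prop :=
  (Matrix.of g).PosSemidef ∧
    (Matrix.of fun i j : {i : Fin n // g i i ≠ 0} => g i.1 j.1).PosDef

variable {n m : ℕ} (E : Type*) [NormedAddCommGroup E] [InnerProductSpace ℂ E]
  [FiniteDimensional ℂ E]

/-- `H_{g,m}(I) ⊆ ℂ^m ⊗ H_g`: the span of the vectors `a ⊗ gᵢ` for `a ∈ ℂ^m` and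
`i ∈ I ∩ spt g`, realized inside `(ℂ^m ⊗ E, ‖·‖₂)` via vectors `v i` realizing the Gram
matrix `g`. -/
def Hgm (g : Fin n → Fin n → ℂ) (v : Fin n → E) (m : ℕ) (I : Set (Fin n)) :
    Submodule ℂ (PiLp 2 fun _ : Fin m => E) :=
  Submodule.span ℂ {x | ∃ (a : Fin m → ℂ) (i : Fin n), i ∈ I ∧ g i i ≠ 0 ∧
    x = (WithLp.equiv 2 (∀ _ : Fin m, E)).symm fun k => a k • v i}

/-- `T` is the operator `T_{g,z}` on `H_{g,m}(I)`, i.e. it satisfies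
`T (a ⊗ gᵢ) = (z(i)* a) ⊗ gᵢ` for all `a ∈ ℂ^m` and `i ∈ I ∩ spt g`. -/
def IsTgz (g : Fin n → Fin n → ℂ) (v : Fin n → E) (I : Set (Fin n))
    (z : Fin n → Matrix (Fin m) (Fin m) ℂ)
    (T : Hgm E g v m I →L[ℂ] Hgm E g v m I) : Prop :=
  ∀ i ∈ I, g i i ≠ 0 → ∀ a : Fin m → ℂ,
    ∀ hx : (WithLp.equiv 2 (∀ _ : Fin m, E)).symm (fun k => a k • v i) ∈ Hgm E g v m I,
      (T ⟨_, hx⟩ : PiLp 2 fun _ : Fin m => E) =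
        (WithLp.equiv 2 (∀ _ : Fin m, E)).symm fun k => ((z i)ᴴ.mulVec a) k • v i

/-- `H_{g,m}(I₀,I₁) = H_{g,m}(I₁) ⊖ H_{g,m}(I₁ \ I₀)`. -/
def HgmPerp (g : Fin n → Fin n → ℂ) (v : Fin n → E) (m : ℕ) (I₀ I₁ : Set (Fin n)) :
    Submodule ℂ (PiLp 2 fun _ : Fin m => E) :=
  Hgm E g v m I₁ ⊓ (Hgm E g v m (I₁ \ I₀))ᗮ

/-- The vectors `v` realize the Gram matrix `g`, i.e. `⟪v i, v j⟫ = g j i`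
(with Mathlib's inner product, conjugate-linear in the first variable); equivalently,
in the paper's convention, `⟨v j, v i⟩ = g(j,i)`, matching `⟨g_j, g_i⟩_{H_g} = g(j,i)`. -/
def IsGramRealization (g : Fin n → Fin n → ℂ) (v : Fin n → E) : Prop :=
  ∀ i j, (inner ℂ (v i) (v j) : ℂ) = g j i

/-- **Independence of the compression from the choice of extension.** If `z̃₁, z̃₂` are two
extensions to `I₁` of `z : I₀ → M_m(ℂ)` and `T₁, T₂` are the corresponding operators
`T_{g,z̃₁}, T_{g,z̃₂}` on `H_{g,m}(I₁)`, then the compressions to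
`H_{g,m}(I₀,I₁) = H_{g,m}(I₁) ⊖ H_{g,m}(I₁ \ I₀)` agree:
`P T₁ x = P T₂ x` for every `x ∈ H_{g,m}(I₀,I₁)`. -/
theorem stmt15 (hm : 0 < m) (g : Fin n → Fin n → ℂ) (hg : IsDiscreteKernel n g)
    (v : Fin n → E) (hv : IsGramRealization E g v)
    (I₀ I₁ : Set (Fin n)) (hI : I₀ ⊆ I₁)
    (z zt₁ zt₂ : Fin n → Matrix (Fin m) (Fin m) ℂ)
    (hzt₁ : ∀ i ∈ I₀, zt₁ i = z i) (hzt₂ : ∀ i ∈ I₀, zt₂ i = z i)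
    (T₁ T₂ : Hgm E g v m I₁ →L[ℂ] Hgm E g v m I₁)
    (hT₁ : IsTgz E g v I₁ zt₁ T₁) (hT₂ : IsTgz E g v I₁ zt₂ T₂) :
    ∀ (x : PiLp 2 fun _ : Fin m => E) (hx : x ∈ HgmPerp E g v m I₀ I₁),
      Submodule.orthogonalProjection (HgmPerp E g v m I₀ I₁) (T₁ ⟨x, hx.1⟩ : PiLp 2 fun _ : Fin m => E) =
      Submodule.orthogonalProjection (HgmPerp E g v m I₀ I₁) (T₂ ⟨x, hx.1⟩ : PiLp 2 fun _ : Fin m => E) := by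
  intro x hx
  -- Key claim: for every `y ∈ H_{g,m}(I₁)`, `T₁ y - T₂ y ∈ H_{g,m}(I₁ \ I₀)`.
  have key : ∀ (y : PiLp 2 fun _ : Fin m => E) (hy : y ∈ Hgm E g v m I₁),
      (T₁ ⟨y, hy⟩ : PiLp 2 fun _ : Fin m => E) - (T₂ ⟨y, hy⟩ : PiLp 2 fun _ : Fin m => E)
        ∈ Hgm E g v m (I₁ \ I₀) := by
    intro y hy
    induction hy using Submodule.span_induction with
    | mem u hu =>
      obtain ⟨a, i, hi, hgi, rfl⟩ := hu
      have hmem : (WithLp.equiv 2 (∀ _ : Fin m, E)).symm (fun k => a k • v i)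
          ∈ Hgm E g v m I₁ := Submodule.subset_span ⟨a, i, hi, hgi, rfl⟩
      have h1 := hT₁ i hi hgi a hmem
      have h2 := hT₂ i hi hgi a hmem
      rw [h1, h2]
      by_cases hi0 : i ∈ I₀
      · rw [hzt₁ i hi0, hzt₂ i hi0, sub_self]
        exact Submodule.zero_mem _
      · refine Submodule.subset_span
          ⟨((zt₁ i)ᴴ.mulVec a) - ((zt₂ i)ᴴ.mulVec a), i, ⟨hi, hi0⟩, hgi, ?_⟩
        ext k
        simp [sub_smul]
    | zero =>
      have h0 : (⟨(0 : PiLp 2 fun _ : Fin m => E), Submodule.zero_mem _⟩ :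
          Hgm E g v m I₁) = 0 := rfl
      rw [h0, map_zero, map_zero]
      simp
    | add u w hu hw ihu ihw =>
      have hsum : (⟨u + w, Submodule.add_mem _ hu hw⟩ : Hgm E g v m I₁)
          = ⟨u, hu⟩ + ⟨w, hw⟩ := rfl
      rw [hsum, map_add, map_add]
      have : ((T₁ ⟨u, hu⟩ + T₁ ⟨w, hw⟩ : Hgm E g v m I₁) : PiLp 2 fun _ : Fin m => E)
          - ((T₂ ⟨u, hu⟩ + T₂ ⟨w, hw⟩ : Hgm E g v m I₁) : PiLp 2 fun _ : Fin m => E)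
          = ((T₁ ⟨u, hu⟩ : PiLp 2 fun _ : Fin m => E) - T₂ ⟨u, hu⟩)
            + ((T₁ ⟨w, hw⟩ : PiLp 2 fun _ : Fin m => E) - T₂ ⟨w, hw⟩) := by
        push_cast
        abel
      rw [this]
      exact Submodule.add_mem _ ihu ihw
    | smul c u hu ihu =>
      have hsm : (⟨c • u, Submodule.smul_mem _ c hu⟩ : Hgm E g v m I₁)
          = c • ⟨u, hu⟩ := rfl
      rw [hsm, _root_.map_smul, _root_.map_smul]
      have : ((c • T₁ ⟨u, hu⟩ : Hgm E g v m I₁) : PiLp 2 fun _ : Fin m => E)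
          - ((c • T₂ ⟨u, hu⟩ : Hgm E g v m I₁) : PiLp 2 fun _ : Fin m => E)
          = c • ((T₁ ⟨u, hu⟩ : PiLp 2 fun _ : Fin m => E) - T₂ ⟨u, hu⟩) := by
        push_cast
        module
      rw [this]
      exact Submodule.smul_mem _ c ihu
  -- `H_{g,m}(I₁ \ I₀)` is orthogonal to `HgmPerp`.
  have hperp : Hgm E g v m (I₁ \ I₀) ≤ (HgmPerp E g v m I₀ I₁)ᗮ := by
    intro u hu
    rw [Submodule.mem_orthogonal']
    intro w hw
    exact (Submodule.mem_orthogonal _ w).mp hw.2 u hu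
  have h0 := Submodule.orthogonalProjectionOnto_apply_of_mem_orthogonal
    (hperp (key x hx.1))
  rw [← sub_eq_zero, ← map_sub]
  exact h0
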